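/- For all natural numbers n, N with n < 2^N and every integer x, the binomial coefficient polynomial satisfies C(x + 2^{N+1}, n) ≡ C(x, n) (mod 4), where C(x,n) = (1/n!)·∏_{ℓ=0}^{n-1}(x − ℓ). -/

import Mathlib

/-- The binomial coefficient polynomial `C(x,n) = (1/n!)·∏_{ℓ=0}^{n-1}(x−ℓ)`. -/
noncomputable def qbinom (x : ℚ) (n : ℕ) : ℚ :=
  (∏ ℓ ∈ Finset.range n, (x - (ℓ : ℚ))) / (Nat.factorial n : ℚ)

lemma descPochhammer_eval_prod (x : ℤ) (n : ℕ) :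
    (descPochhammer ℤ n).eval x = ∏ ℓ ∈ Finset.range n, (x - (ℓ : ℤ)) := by
  induction n with
  | zero => simp
  | succ n ih =>
    rw [descPochhammer_succ_right, Finset.prod_range_succ, ← ih]
    simp only [Polynomial.eval_mul, Polynomial.eval_sub, Polynomial.eval_X,
      Polynomial.eval_natCast]

lemma qbinom_eq_ring_choose (x : ℤ) (n : ℕ) :
    qbinom (x : ℚ) n = ((Ring.choose x n : ℤ) : ℚ) := by
  have h := Ring.descPochhammer_eq_factorial_smul_choose x n
  rw [← Polynomial.eval_eq_smeval, descPochhammer_eval_prod, nsmul_eq_mul] at h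
  have hf : (n.factorial : ℚ) ≠ 0 := by exact_mod_cast n.factorial_ne_zero
  rw [qbinom, div_eq_iff hf]
  have := congrArg (fun t : ℤ => (t : ℚ)) h
  push_cast at this ⊢
  linarith [this]

lemma four_dvd_choose {N k : ℕ} (hk : k ≠ 0) (hkN : k < 2 ^ N) :
    4 ∣ Nat.choose (2 ^ (N + 1)) k := by
  obtain ⟨k', rfl⟩ := Nat.exists_eq_succ_of_ne_zero hk
  have hpow : 0 < 2 ^ (N + 1) := Nat.pow_pos (by norm_num)
  have hid : 2 ^ (N + 1) * Nat.choose (2 ^ (N + 1) - 1) k' =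
      Nat.choose (2 ^ (N + 1)) (k' + 1) * (k' + 1) := by
    have := Nat.add_one_mul_choose_eq (2 ^ (N + 1) - 1) k'
    rwa [Nat.sub_add_cancel hpow] at this
  set C := Nat.choose (2 ^ (N + 1)) (k' + 1) with hC
  set A := Nat.choose (2 ^ (N + 1) - 1) k' with hA
  have hk2 : k' + 1 < 2 ^ (N + 1) := lt_of_lt_of_le hkN
    (Nat.pow_le_pow_right (by norm_num) (Nat.le_succ N))
  have hCne : C ≠ 0 := Nat.ne_of_gt (Nat.choose_pos hk2.le)
  have hAne : A ≠ 0 := by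
    refine Nat.ne_of_gt (Nat.choose_pos ?_)
    omega
  have hkne : k' + 1 ≠ 0 := Nat.succ_ne_zero _
  -- compare 2-adic valuations
  have hp : Nat.Prime 2 := Nat.prime_two
  set v := (k' + 1).factorization 2 with hv
  have hvN : v < N := by
    have h1 : 2 ^ v ≤ k' + 1 := Nat.le_of_dvd (Nat.succ_pos _) (Nat.ordProj_dvd _ 2)
    have h2 : 2 ^ v < 2 ^ N := lt_of_le_of_lt h1 hkN
    exact (Nat.pow_lt_pow_iff_right (by norm_num)).mp h2
  have hfac := congrArg (fun t => t.factorization 2) hid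
  simp only [Nat.factorization_mul (Nat.ne_of_gt hpow) hAne,
    Nat.factorization_mul hCne hkne, Nat.Prime.factorization_pow,
    Finsupp.add_apply] at hfac
  have hpw : ((2:ℕ) ^ (N + 1)).factorization 2 = N + 1 := by
    rw [Nat.Prime.factorization_pow hp]
    simp
  rw [hpw] at hfac
  have hge : 2 ≤ C.factorization 2 := by omega
  have : (2:ℕ) ^ 2 ∣ C := (Nat.Prime.pow_dvd_iff_le_factorization hp hCne).mpr hge
  simpa using this

/-- For `n < 2^N` and every integer `x`, `C(x + 2^{N+1}, n) ≡ C(x, n) (mod 4)`. -/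
theorem stmt6 : ∀ n N : ℕ, n < 2 ^ N → ∀ x : ℤ,
    ∃ z : ℤ, qbinom ((x : ℚ) + 2 ^ (N + 1)) n - qbinom (x : ℚ) n = 4 * z := by
  intro n N hn x
  have hvdm := Ring.add_choose_eq (r := x) (s := ((2 ^ (N + 1) : ℕ) : ℤ)) n (Commute.all _ _)
  have hterm : ∀ ij ∈ Finset.HasAntidiagonal.antidiagonal n,
      Ring.choose (x : ℤ) ij.1 * Ring.choose ((2 ^ (N + 1) : ℕ) : ℤ) ij.2 =
      Ring.choose (x : ℤ) ij.1 * ((Nat.choose (2 ^ (N + 1)) ij.2 : ℕ) : ℤ) := by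
    intro ij _
    rw [Ring.choose_natCast]
  rw [Finset.sum_congr rfl hterm] at hvdm
  have hmem : (n, 0) ∈ Finset.HasAntidiagonal.antidiagonal n := by simp
  rw [← Finset.add_sum_erase _ _ hmem] at hvdm
  simp only [Ring.choose_zero_right, Nat.choose_zero_right, Nat.cast_one, mul_one] at hvdm
  have hdvd : (4 : ℤ) ∣ ∑ ij ∈ (Finset.HasAntidiagonal.antidiagonal n).erase (n, 0),
      Ring.choose (x : ℤ) ij.1 * ((Nat.choose (2 ^ (N + 1)) ij.2 : ℕ) : ℤ) := by
    refine Finset.dvd_sum ?_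
    intro ij hij
    have hij' := Finset.mem_of_mem_erase hij
    have hne := Finset.ne_of_mem_erase hij
    rw [Finset.HasAntidiagonal.mem_antidiagonal] at hij'
    have h2 : ij.2 ≠ 0 := by
      intro h0
      apply hne
      have : ij.1 = n := by omega
      exact Prod.ext this h0
    have hlt : ij.2 < 2 ^ N := lt_of_le_of_lt (by omega) hn
    obtain ⟨c, hc⟩ := four_dvd_choose h2 hlt
    exact ⟨Ring.choose (x : ℤ) ij.1 * c, by rw [hc]; push_cast; ring⟩
  obtain ⟨z, hz⟩ := hdvd
  refine ⟨z, ?_⟩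
  have hx2 : ((x : ℚ) + 2 ^ (N + 1)) = (((x + ((2 ^ (N + 1) : ℕ) : ℤ)) : ℤ) : ℚ) := by
    push_cast; ring
  rw [hx2, qbinom_eq_ring_choose, qbinom_eq_ring_choose, hvdm, hz]
  push_cast
  ring
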